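/- Let k ≥ 1 and let μ be a Borel probability measure on ℝ^k whose support is contained in the closed ball of radius R₀ centered at the origin. Then for every τ > 0 and every x ∈ ℝ^k, the operator norm of the Hessian of the log heat-smoothed density is bounded: ‖∇²_x log p_τ(x)‖₂ ≤ 1/τ + R₀²/τ². -/

import Mathlib

open MeasureTheory

noncomputable section

abbrev Euc (k : ℕ) : Type := EuclideanSpace ℝ (Fin k)

/-- The centered Gaussian density on `ℝ^k` with covariance `τ • I`. -/
def gaussDensity (k : ℕ) (τ : ℝ) (z : Euc k) : ℝ :=
  (2 * Real.pi * τ) ^ (-(k : ℝ) / 2) * Real.exp (-‖z‖ ^ 2 / (2 * τ))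

/-- The heat-smoothed density `p_τ(x) = ∫ φ_τ(x - y) dμ(y)`. -/
def heatDensity {k : ℕ} (μ : Measure (Euc k)) (τ : ℝ) (x : Euc k) : ℝ :=
  ∫ y, gaussDensity k τ (x - y) ∂μ

/-- Partial derivative of `f` in the `i`-th coordinate direction. -/
def pderiv' {k : ℕ} (f : Euc k → ℝ) (i : Fin k) (x : Euc k) : ℝ :=
  fderiv ℝ f x (EuclideanSpace.single i 1)

/-- Entry `(i, j)` of the Hessian matrix of `f` at `x`. -/
def hessEntry {k : ℕ} (f : Euc k → ℝ) (i j : Fin k) (x : Euc k) : ℝ :=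
  pderiv' (pderiv' f j) i x

/-- The Laplacian of `f` at `x`. -/
def laplacian' {k : ℕ} (f : Euc k → ℝ) (x : Euc k) : ℝ :=
  ∑ i, hessEntry f i i x

/-- The squared Frobenius norm of the Hessian of `f` at `x`. -/
def hessFrobSq {k : ℕ} (f : Euc k → ℝ) (x : Euc k) : ℝ :=
  ∑ i, ∑ j, hessEntry f i j x ^ 2

/-- The log heat-smoothed density. -/
def logHeat {k : ℕ} (μ : Measure (Euc k)) (τ : ℝ) (x : Euc k) : ℝ :=
  Real.log (heatDensity μ τ x)

/-- The Fisher Information `I^{(k)}(μ_τ) = ∫ p_τ ‖∇ log p_τ‖²`. -/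
def FisherInfo {k : ℕ} (μ : Measure (Euc k)) (τ : ℝ) : ℝ :=
  ∫ x, heatDensity μ τ x * ‖gradient (logHeat μ τ) x‖ ^ 2

/-- The Fisher Information Rate `R^{(k)}(μ_τ) = ∫ p_τ ‖∇² log p_τ‖_F²`. -/
def FisherInfoRate {k : ℕ} (μ : Measure (Euc k)) (τ : ℝ) : ℝ :=
  ∫ x, heatDensity μ τ x * hessFrobSq (logHeat μ τ) x

/-- The posterior mean `m_τ(x)` of a clean sample given noisy observation `x`. -/
def postMean {k : ℕ} (μ : Measure (Euc k)) (τ : ℝ) (x : Euc k) : Euc k :=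
  (heatDensity μ τ x)⁻¹ • ∫ y, gaussDensity k τ (x - y) • y ∂μ

/-- The Hessian matrix of `f` at `x`. -/
def hessMatrix {k : ℕ} (f : Euc k → ℝ) (x : Euc k) : Matrix (Fin k) (Fin k) ℝ :=
  fun i j => hessEntry f i j x

section AuxHessianBound
open Real Metric RealInnerProductSpace

variable {k : ℕ} {τ : ℝ}


lemma gauss_pos (hτ : 0 < τ) (z : Euc k) : 0 < gaussDensity k τ z := by
  unfold gaussDensity
  have := Real.pi_pos
  positivity

lemma gauss_le (hτ : 0 < τ) (z : Euc k) :
    gaussDensity k τ z ≤ (2 * Real.pi * τ) ^ (-(k : ℝ) / 2) := by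
  unfold gaussDensity
  have hb : (0:ℝ) < (2 * Real.pi * τ) ^ (-(k : ℝ) / 2) := by
    have := Real.pi_pos; positivity
  nth_rewrite 2 [← mul_one ((2 * Real.pi * τ) ^ (-(k : ℝ) / 2))]
  gcongr
  rw [← Real.exp_zero]
  apply Real.exp_le_exp.2
  have h1 : (0:ℝ) ≤ ‖z‖^2 := by positivity
  have h2 : (0:ℝ) < 2 * τ := by linarith
  rw [div_nonpos_iff]
  right; constructor <;> linarith

lemma gauss_cont : Continuous (gaussDensity k τ) := by
  unfold gaussDensity
  fun_prop

/-- derivative CLM of `x ↦ φ(x - y)` -/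
def gaussD (k : ℕ) (τ : ℝ) (x y : Euc k) : Euc k →L[ℝ] ℝ :=
  (-τ⁻¹ * gaussDensity k τ (x - y)) • innerSL ℝ (x - y)

lemma gauss_hasFDerivAt (y x : Euc k) :
    HasFDerivAt (fun x => gaussDensity k τ (x - y)) (gaussD k τ x y) x := by
  have h1 : HasFDerivAt (fun x : Euc k => ‖x - y‖ ^ 2)
      (2 • (innerSL ℝ (x - y)).comp (ContinuousLinearMap.id ℝ (Euc k))) x := by
    simpa using ((hasFDerivAt_id x).sub_const y).norm_sq
  have h2 : HasFDerivAt (fun x : Euc k => -‖x - y‖ ^ 2 / (2 * τ))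
      ((-(2 * τ)⁻¹) • (2 • (innerSL ℝ (x - y)).comp (ContinuousLinearMap.id ℝ (Euc k)))) x := by
    have := h1.const_smul (-(2 * τ)⁻¹)
    have hf : (fun x : Euc k => -‖x - y‖ ^ 2 / (2 * τ)) =
        (-(2 * τ)⁻¹) • (fun x : Euc k => ‖x - y‖ ^ 2) := by
      funext x
      simp [div_eq_mul_inv]
      ring
    rw [hf]
    exact this
  have h3 := (Real.hasDerivAt_exp (-‖x - y‖ ^ 2 / (2 * τ))).comp_hasFDerivAt x h2
  have h4 := h3.const_smul ((2 * Real.pi * τ) ^ (-(k : ℝ) / 2))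
  have hfun : (fun x : Euc k => gaussDensity k τ (x - y)) =
      fun x => (2 * Real.pi * τ) ^ (-(k : ℝ) / 2) •
        (Real.exp ∘ fun x : Euc k => -‖x - y‖ ^ 2 / (2 * τ)) x := by
    funext x; simp [gaussDensity, smul_eq_mul]
  have heq : gaussD k τ x y =
      ((2 * Real.pi * τ) ^ (-(k : ℝ) / 2)) • (Real.exp (-‖x - y‖ ^ 2 / (2 * τ)) •
        ((-(2 * τ)⁻¹) • (2 • (innerSL ℝ (x - y)).comp (ContinuousLinearMap.id ℝ (Euc k))))) := by
    ext h
    simp [gaussD, gaussDensity, smul_eq_mul]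
    ring
  rw [hfun, heq]
  exact h4


lemma gaussD_norm_le (hτ : 0 < τ) (x y : Euc k) :
    ‖gaussD k τ x y‖ ≤ τ⁻¹ * (2 * Real.pi * τ) ^ (-(k : ℝ) / 2) * ‖x - y‖ := by
  rw [gaussD]
  rw [norm_smul (-τ⁻¹ * gaussDensity k τ (x - y)) (innerSL ℝ (x - y))]
  rw [innerSL_apply_norm]
  rw [Real.norm_eq_abs, abs_mul, abs_neg, abs_inv, abs_of_pos hτ,
    abs_of_pos (gauss_pos hτ _)]
  gcongr
  exact gauss_le hτ _

lemma gaussD_cont (x : Euc k) : Continuous (fun y => gaussD k τ x y) := by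
  unfold gaussD
  apply Continuous.smul (f := fun y => -τ⁻¹ * gaussDensity k τ (x - y)) (g := fun y => innerSL ℝ (x - y))
  · exact continuous_const.mul (gauss_cont.comp (continuous_const.sub continuous_id))
  · exact (innerSL ℝ).continuous.comp (continuous_const.sub continuous_id)


variable (μ : Measure (Euc k)) [IsProbabilityMeasure μ] {R₀ : ℝ}


lemma ae_norm_le (hsupp : μ (Metric.closedBall (0 : Euc k) R₀)ᶜ = 0) :
    ∀ᵐ y ∂μ, ‖y‖ ≤ R₀ := by
  have : Metric.closedBall (0 : Euc k) R₀ ∈ ae μ := mem_ae_iff.2 hsupp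
  filter_upwards [this] with y hy
  simpa [Metric.mem_closedBall, dist_zero_right] using hy

lemma int_cont_bdd {E : Type*} [NormedAddCommGroup E]
    (hsupp : μ (Metric.closedBall (0 : Euc k) R₀)ᶜ = 0)
    {f : Euc k → E} (hf : Continuous f) {C : ℝ}
    (hC : ∀ y : Euc k, ‖y‖ ≤ R₀ → ‖f y‖ ≤ C) : Integrable f μ := by
  refine (integrable_const C).mono' hf.aestronglyMeasurable ?_
  filter_upwards [ae_norm_le μ hsupp] with y hy using hC y hy

lemma hasFDerivAt_heat (hτ : 0 < τ) (hsupp : μ (Metric.closedBall (0 : Euc k) R₀)ᶜ = 0)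
    (x₀ : Euc k) :
    HasFDerivAt (heatDensity μ τ) (∫ y, gaussD k τ x₀ y ∂μ) x₀ := by
  set c := (2 * Real.pi * τ) ^ (-(k : ℝ) / 2) with hc
  have hc0 : 0 < c := by have := Real.pi_pos; positivity
  apply hasFDerivAt_integral_of_dominated_of_fderiv_le (s := Metric.ball x₀ 1) (Metric.ball_mem_nhds x₀ one_pos)
    (bound := fun _ => τ⁻¹ * c * (‖x₀‖ + 1 + R₀))
  · filter_upwards with x
    exact (gauss_cont.comp (continuous_const.sub continuous_id)).aestronglyMeasurable
  · exact int_cont_bdd μ hsupp (gauss_cont.comp (continuous_const.sub continuous_id))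
      (C := c) (fun y _ => by
        rw [Real.norm_eq_abs, abs_of_pos (gauss_pos hτ _)]; exact gauss_le hτ _)
  · exact (gaussD_cont x₀).aestronglyMeasurable
  · filter_upwards [ae_norm_le μ hsupp] with y hy x hx
    refine (gaussD_norm_le hτ x y).trans ?_
    have h1 : ‖x - y‖ ≤ ‖x₀‖ + 1 + R₀ := by
      have : ‖x‖ ≤ ‖x₀‖ + 1 := by
        have := mem_ball_iff_norm.1 hx
        calc ‖x‖ = ‖x₀ + (x - x₀)‖ := by rw [add_sub_cancel]
        _ ≤ ‖x₀‖ + ‖x - x₀‖ := norm_add_le _ _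
        _ ≤ ‖x₀‖ + 1 := by linarith
      calc ‖x - y‖ ≤ ‖x‖ + ‖y‖ := norm_sub_le _ _
      _ ≤ ‖x₀‖ + 1 + R₀ := by linarith
    exact mul_le_mul_of_nonneg_left h1 (by positivity)
  · exact integrable_const _
  · filter_upwards with y x _ using gauss_hasFDerivAt y x

-- abbreviation for the sup of the gaussian
local notation "gc" => (2 * Real.pi * τ) ^ (-(k : ℝ) / 2)

lemma gc_pos (hτ : 0 < τ) : (0:ℝ) < gc := by
  have := Real.pi_pos; positivity

lemma gauss_abs_le (hτ : 0 < τ) (z : Euc k) : ‖gaussDensity k τ z‖ ≤ gc := by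
  rw [Real.norm_eq_abs, abs_of_pos (gauss_pos hτ _)]; exact gauss_le hτ _

lemma cont_sub (x : Euc k) : Continuous (fun y : Euc k => x - y) :=
  continuous_const.sub continuous_id

lemma cont_w (x : Euc k) : Continuous (fun y : Euc k => gaussDensity k τ (x - y)) :=
  gauss_cont.comp (cont_sub x)

lemma int_w (hτ : 0 < τ) (hsupp : μ (Metric.closedBall (0 : Euc k) R₀)ᶜ = 0) (x : Euc k) :
    Integrable (fun y => gaussDensity k τ (x - y)) μ :=
  int_cont_bdd μ hsupp (cont_w x) (C := gc) (fun y _ => gauss_abs_le hτ _)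

lemma heat_pos (hτ : 0 < τ) (hsupp : μ (Metric.closedBall (0 : Euc k) R₀)ᶜ = 0) (x : Euc k) :
    0 < heatDensity μ τ x := by
  rw [heatDensity]
  rw [integral_pos_iff_support_of_nonneg (fun y => (gauss_pos hτ _).le) (int_w μ hτ hsupp x)]
  have : Function.support (fun y => gaussDensity k τ (x - y)) = Set.univ := by
    ext y; simp [Function.mem_support, (gauss_pos hτ (x - y)).ne']
  rw [this]
  simp

lemma abs_coord_le (h : Euc k) (j : Fin k) : |h j| ≤ ‖h‖ := by
  have h1 : h j = @inner ℝ _ _ h (EuclideanSpace.single j 1) := by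
    rw [EuclideanSpace.inner_single_right]; simp
  rw [h1]
  refine (abs_real_inner_le_norm _ _).trans ?_
  simp

/-- second derivative CLM of `x ↦ -τ⁻¹ φ(x-y) (x-y)_j` -/
def gaussD2 (k : ℕ) (τ : ℝ) (j : Fin k) (x y : Euc k) : Euc k →L[ℝ] ℝ :=
  (-τ⁻¹ * gaussDensity k τ (x - y)) • EuclideanSpace.proj j
    + ((x - y) j) • ((-τ⁻¹) • gaussD k τ x y)

lemma coord_hasFDerivAt (y x : Euc k) (j : Fin k) :
    HasFDerivAt (fun x : Euc k => (x - y) j) (EuclideanSpace.proj (𝕜 := ℝ) j) x := by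
  have h := ((EuclideanSpace.proj (𝕜 := ℝ) j).hasFDerivAt (x := x - y)).comp x
    ((hasFDerivAt_id x).sub_const y)
  exact h

lemma gaussDj_hasFDerivAt (y x : Euc k) (j : Fin k) :
    HasFDerivAt (fun x => (-τ⁻¹ * gaussDensity k τ (x - y)) * ((x - y) j))
      (gaussD2 k τ j x y) x := by
  have hu : HasFDerivAt (fun x => -τ⁻¹ * gaussDensity k τ (x - y))
      ((-τ⁻¹) • gaussD k τ x y) x := (gauss_hasFDerivAt y x).const_mul (-τ⁻¹)
  exact hu.mul (coord_hasFDerivAt y x j)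

lemma gaussD2_norm_le (hτ : 0 < τ) (x y : Euc k) (j : Fin k) :
    ‖gaussD2 k τ j x y‖ ≤ τ⁻¹ * gc + ‖x - y‖ * (τ⁻¹ * (τ⁻¹ * gc * ‖x - y‖)) := by
  refine (norm_add_le _ _).trans ?_
  gcongr
  · refine le_trans (le_of_eq (norm_smul (-τ⁻¹ * gaussDensity k τ (x - y))
      (EuclideanSpace.proj (𝕜 := ℝ) (ι := Fin k) j))) ?_
    have h1 : ‖EuclideanSpace.proj (𝕜 := ℝ) (ι := Fin k) j‖ ≤ 1 := by
      refine ContinuousLinearMap.opNorm_le_bound _ zero_le_one (fun h => ?_)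
      simpa using abs_coord_le h j
    calc ‖-τ⁻¹ * gaussDensity k τ (x - y)‖ * ‖EuclideanSpace.proj (𝕜 := ℝ) (ι := Fin k) j‖
        ≤ ‖-τ⁻¹ * gaussDensity k τ (x - y)‖ * 1 := by gcongr
      _ = |τ⁻¹| * ‖gaussDensity k τ (x - y)‖ := by
          rw [mul_one, norm_mul, Real.norm_eq_abs (-τ⁻¹), abs_neg]
      _ ≤ τ⁻¹ * gc := by
          rw [abs_of_pos (show (0:ℝ) < τ⁻¹ by positivity)]
          exact mul_le_mul_of_nonneg_left (gauss_abs_le hτ _) (by positivity)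
  · refine le_trans (le_of_eq (norm_smul (((x - y) j : ℝ)) ((-τ⁻¹) • gaussD k τ x y))) ?_
    have := gaussD_norm_le (k := k) hτ x y
    calc ‖((x - y) j : ℝ)‖ * ‖(-τ⁻¹) • gaussD k τ x y‖
        ≤ ‖x - y‖ * ‖(-τ⁻¹) • gaussD k τ x y‖ :=
          mul_le_mul_of_nonneg_right (by simpa using abs_coord_le (x - y) j) (norm_nonneg _)
      _ ≤ ‖x - y‖ * (τ⁻¹ * (τ⁻¹ * gc * ‖x - y‖)) := by
          refine mul_le_mul_of_nonneg_left ?_ (norm_nonneg _)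
          refine le_trans (le_of_eq (norm_smul (-τ⁻¹) (gaussD k τ x y))) ?_
          rw [norm_neg, Real.norm_eq_abs, abs_of_pos (show (0:ℝ) < τ⁻¹ by positivity)]
          exact mul_le_mul_of_nonneg_left (gaussD_norm_le hτ x y) (by positivity)

lemma gaussD2_cont (x : Euc k) (j : Fin k) : Continuous (fun y => gaussD2 k τ j x y) := by
  apply Continuous.add
  · exact (continuous_const.mul (cont_w x)).smul continuous_const
  · exact ((EuclideanSpace.proj (𝕜 := ℝ) j).continuous.comp (cont_sub x)).smul
      ((gaussD_cont (τ := τ) x).const_smul (-τ⁻¹))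

def D1 (k : ℕ) (μ : Measure (Euc k)) (τ : ℝ) (j : Fin k) (x : Euc k) : ℝ :=
  ∫ y, (-τ⁻¹ * gaussDensity k τ (x - y)) * ((x - y) j) ∂μ

lemma hasFDerivAt_D1 (hτ : 0 < τ) (hsupp : μ (Metric.closedBall (0 : Euc k) R₀)ᶜ = 0)
    (j : Fin k) (x₀ : Euc k) :
    HasFDerivAt (D1 k μ τ j) (∫ y, gaussD2 k τ j x₀ y ∂μ) x₀ := by
  have hc0 := gc_pos (k := k) hτ
  set M : ℝ := ‖x₀‖ + 1 + R₀ with hM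
  apply hasFDerivAt_integral_of_dominated_of_fderiv_le (s := Metric.ball x₀ 1) (Metric.ball_mem_nhds x₀ one_pos)
    (bound := fun _ => τ⁻¹ * gc + M * (τ⁻¹ * (τ⁻¹ * gc * M)))
  · filter_upwards with x
    exact ((continuous_const.mul (cont_w x)).mul
      ((EuclideanSpace.proj (𝕜 := ℝ) j).continuous.comp (cont_sub x))).aestronglyMeasurable
  · refine int_cont_bdd μ hsupp ((continuous_const.mul (cont_w x₀)).mul
      ((EuclideanSpace.proj (𝕜 := ℝ) j).continuous.comp (cont_sub x₀)))
      (C := τ⁻¹ * gc * (‖x₀‖ + R₀)) (fun y hy => ?_)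
    have hxy : ‖x₀ - y‖ ≤ ‖x₀‖ + R₀ := (norm_sub_le _ _).trans (by linarith)
    rw [Real.norm_eq_abs, abs_mul, abs_mul, abs_neg, abs_inv, abs_of_pos hτ]
    have h2 := abs_coord_le (x₀ - y) j
    have h3 : |gaussDensity k τ (x₀ - y)| ≤ gc := gauss_abs_le hτ _
    have hc0 := gc_pos (k := k) hτ
    have h4 : |gaussDensity k τ (x₀ - y)| * |(x₀ - y) j| ≤ gc * ‖x₀ - y‖ :=
      mul_le_mul h3 h2 (abs_nonneg _) hc0.le
    have hτi : (0:ℝ) ≤ τ⁻¹ := by positivity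
    calc τ⁻¹ * |gaussDensity k τ (x₀ - y)| * |(x₀ - y) j|
        = τ⁻¹ * (|gaussDensity k τ (x₀ - y)| * |(x₀ - y) j|) := by ring
      _ ≤ τ⁻¹ * (gc * ‖x₀ - y‖) := by gcongr
      _ = τ⁻¹ * gc * ‖x₀ - y‖ := by ring
      _ ≤ τ⁻¹ * gc * (‖x₀‖ + R₀) := by gcongr
  · exact (gaussD2_cont x₀ j).aestronglyMeasurable
  · filter_upwards [ae_norm_le μ hsupp] with y hy x hx
    refine (gaussD2_norm_le hτ x y j).trans ?_
    have h1 : ‖x - y‖ ≤ M := by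
      have hxx : ‖x‖ ≤ ‖x₀‖ + 1 := by
        have := mem_ball_iff_norm.1 hx
        calc ‖x‖ = ‖x₀ + (x - x₀)‖ := by rw [add_sub_cancel]
        _ ≤ ‖x₀‖ + ‖x - x₀‖ := norm_add_le _ _
        _ ≤ ‖x₀‖ + 1 := by linarith
      calc ‖x - y‖ ≤ ‖x‖ + ‖y‖ := norm_sub_le _ _
      _ ≤ M := by rw [hM]; linarith
    have hM0 : 0 ≤ M := le_trans (norm_nonneg _) h1
    gcongr <;> positivity
  · exact integrable_const _
  · filter_upwards with y x _ using gaussDj_hasFDerivAt y x j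

def Aint (k : ℕ) (μ : Measure (Euc k)) (τ : ℝ) (j : Fin k) (x : Euc k) : ℝ :=
  ∫ y, gaussDensity k τ (x - y) * ((x - y) j) ∂μ

def Bint (k : ℕ) (μ : Measure (Euc k)) (τ : ℝ) (i j : Fin k) (x : Euc k) : ℝ :=
  ∫ y, gaussDensity k τ (x - y) * ((x - y) i * (x - y) j) ∂μ

lemma cont_coord (x : Euc k) (j : Fin k) : Continuous (fun y : Euc k => (x - y) j) :=
  (EuclideanSpace.proj (𝕜 := ℝ) j).continuous.comp (cont_sub x)

lemma int_wz (hτ : 0 < τ) (hsupp : μ (Metric.closedBall (0 : Euc k) R₀)ᶜ = 0)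
    (j : Fin k) (x : Euc k) :
    Integrable (fun y => gaussDensity k τ (x - y) * ((x - y) j)) μ := by
  refine int_cont_bdd μ hsupp ((cont_w x).mul (cont_coord x j))
    (C := gc * (‖x‖ + R₀)) (fun y hy => ?_)
  have hxy : ‖x - y‖ ≤ ‖x‖ + R₀ := (norm_sub_le _ _).trans (by linarith)
  rw [Real.norm_eq_abs, abs_mul]
  exact mul_le_mul (gauss_abs_le hτ _) ((abs_coord_le _ j).trans hxy) (abs_nonneg _)
    (gc_pos hτ).le

lemma int_wzz (hτ : 0 < τ) (hsupp : μ (Metric.closedBall (0 : Euc k) R₀)ᶜ = 0)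
    (i j : Fin k) (x : Euc k) :
    Integrable (fun y => gaussDensity k τ (x - y) * ((x - y) i * (x - y) j)) μ := by
  refine int_cont_bdd μ hsupp ((cont_w x).mul ((cont_coord x i).mul (cont_coord x j)))
    (C := gc * ((‖x‖ + R₀) * (‖x‖ + R₀))) (fun y hy => ?_)
  have hxy : ‖x - y‖ ≤ ‖x‖ + R₀ := (norm_sub_le _ _).trans (by linarith)
  rw [Real.norm_eq_abs, abs_mul, abs_mul]
  refine mul_le_mul (gauss_abs_le hτ _) ?_ (by positivity) (gc_pos hτ).le
  exact mul_le_mul ((abs_coord_le _ i).trans hxy) ((abs_coord_le _ j).trans hxy)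
    (abs_nonneg _) ((norm_nonneg (x - y)).trans hxy)

lemma int_gaussD (hτ : 0 < τ) (hsupp : μ (Metric.closedBall (0 : Euc k) R₀)ᶜ = 0) (x : Euc k) :
    Integrable (fun y => gaussD k τ x y) μ := by
  refine int_cont_bdd μ hsupp (gaussD_cont x) (C := τ⁻¹ * gc * (‖x‖ + R₀)) (fun y hy => ?_)
  refine (gaussD_norm_le hτ x y).trans ?_
  have hxy : ‖x - y‖ ≤ ‖x‖ + R₀ := (norm_sub_le _ _).trans (by linarith)
  exact mul_le_mul_of_nonneg_left hxy (by positivity)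

lemma int_gaussD2 (hτ : 0 < τ) (hsupp : μ (Metric.closedBall (0 : Euc k) R₀)ᶜ = 0)
    (j : Fin k) (x : Euc k) :
    Integrable (fun y => gaussD2 k τ j x y) μ := by
  refine int_cont_bdd μ hsupp (gaussD2_cont x j)
    (C := τ⁻¹ * gc + (‖x‖ + R₀) * (τ⁻¹ * (τ⁻¹ * gc * (‖x‖ + R₀)))) (fun y hy => ?_)
  refine (gaussD2_norm_le hτ x y j).trans ?_
  have hxy : ‖x - y‖ ≤ ‖x‖ + R₀ := (norm_sub_le _ _).trans (by linarith)
  have h0 : (0:ℝ) ≤ ‖x‖ + R₀ := (norm_nonneg _).trans hxy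
  have hc0 := gc_pos (k := k) hτ
  have hτi : (0:ℝ) < τ⁻¹ := by positivity
  gcongr

lemma gaussD_apply_single (x y : Euc k) (j : Fin k) :
    gaussD k τ x y (EuclideanSpace.single j 1) =
      (-τ⁻¹ * gaussDensity k τ (x - y)) * ((x - y) j) := by
  simp [gaussD, EuclideanSpace.inner_single_right]

lemma Pd_single (hτ : 0 < τ) (hsupp : μ (Metric.closedBall (0 : Euc k) R₀)ᶜ = 0)
    (j : Fin k) (x : Euc k) :
    (∫ y, gaussD k τ x y ∂μ) (EuclideanSpace.single j 1) = D1 k μ τ j x := by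
  rw [ContinuousLinearMap.integral_apply (int_gaussD μ hτ hsupp x)]
  unfold D1
  congr 1
  funext y
  exact gaussD_apply_single x y j

lemma gaussD2_apply_single (x y : Euc k) (i j : Fin k) :
    gaussD2 k τ j x y (EuclideanSpace.single i 1) =
      τ⁻¹ ^ 2 * (gaussDensity k τ (x - y) * ((x - y) i * (x - y) j))
        - τ⁻¹ * (if i = j then 1 else 0) * gaussDensity k τ (x - y) := by
  have h1 : (EuclideanSpace.proj (𝕜 := ℝ) j) (EuclideanSpace.single i (1:ℝ)) =
      if i = j then 1 else 0 := by
    simp [EuclideanSpace.single_apply]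
    rw [eq_comm]
    simp [eq_comm]
  simp only [gaussD2, ContinuousLinearMap.add_apply, ContinuousLinearMap.smul_apply, h1,
    gaussD_apply_single, smul_eq_mul]
  ring

lemma int_D2_single (hτ : 0 < τ) (hsupp : μ (Metric.closedBall (0 : Euc k) R₀)ᶜ = 0)
    (i j : Fin k) (x : Euc k) :
    (∫ y, gaussD2 k τ j x y ∂μ) (EuclideanSpace.single i 1) =
      τ⁻¹ ^ 2 * Bint k μ τ i j x
        - τ⁻¹ * (if i = j then 1 else 0) * heatDensity μ τ x := by
  rw [ContinuousLinearMap.integral_apply (int_gaussD2 μ hτ hsupp j x)]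
  have : ∀ y : Euc k, gaussD2 k τ j x y (EuclideanSpace.single i 1) =
      τ⁻¹ ^ 2 * (gaussDensity k τ (x - y) * ((x - y) i * (x - y) j))
        - τ⁻¹ * (if i = j then 1 else 0) * gaussDensity k τ (x - y) :=
    fun y => gaussD2_apply_single x y i j
  rw [integral_congr_ae (Filter.Eventually.of_forall this)]
  rw [integral_sub ((int_wzz μ hτ hsupp i j x).const_mul _) ((int_w μ hτ hsupp x).const_mul _)]
  rw [integral_const_mul, integral_const_mul]
  rfl

lemma D1_eq (hτ : 0 < τ) (hsupp : μ (Metric.closedBall (0 : Euc k) R₀)ᶜ = 0)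
    (j : Fin k) (x : Euc k) :
    D1 k μ τ j x = -τ⁻¹ * Aint k μ τ j x := by
  unfold D1 Aint
  rw [← integral_const_mul]
  congr 1; funext y; ring

lemma pderiv'_logHeat (hτ : 0 < τ) (hsupp : μ (Metric.closedBall (0 : Euc k) R₀)ᶜ = 0)
    (j : Fin k) (x : Euc k) :
    pderiv' (logHeat μ τ) j x = (heatDensity μ τ x)⁻¹ * D1 k μ τ j x := by
  have hlog : HasFDerivAt (logHeat μ τ)
      ((heatDensity μ τ x)⁻¹ • (∫ y, gaussD k τ x y ∂μ)) x :=
    (Real.hasDerivAt_log (heat_pos μ hτ hsupp x).ne').comp_hasFDerivAt x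
      (hasFDerivAt_heat μ hτ hsupp x)
  rw [pderiv', hlog.fderiv, ContinuousLinearMap.smul_apply, Pd_single μ hτ hsupp j x,
    smul_eq_mul]

lemma hess_entry_eq (hτ : 0 < τ) (hsupp : μ (Metric.closedBall (0 : Euc k) R₀)ᶜ = 0)
    (i j : Fin k) (x : Euc k) :
    hessEntry (logHeat μ τ) i j x =
      τ⁻¹ ^ 2 * ((heatDensity μ τ x)⁻¹ * Bint k μ τ i j x
        - (heatDensity μ τ x)⁻¹ ^ 2 * Aint k μ τ i x * Aint k μ τ j x)
        - τ⁻¹ * (if i = j then 1 else 0) := by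
  have hq := heat_pos μ hτ hsupp
  have hfun : pderiv' (logHeat μ τ) j = fun x' => (heatDensity μ τ x')⁻¹ * D1 k μ τ j x' :=
    funext (pderiv'_logHeat μ hτ hsupp j)
  have hinv : HasFDerivAt (fun x' => (heatDensity μ τ x')⁻¹)
      ((-((heatDensity μ τ x) ^ 2)⁻¹) • (∫ y, gaussD k τ x y ∂μ)) x :=
    (hasDerivAt_inv (hq x).ne').comp_hasFDerivAt x (hasFDerivAt_heat μ hτ hsupp x)
  have hmul : HasFDerivAt (fun x' => (heatDensity μ τ x')⁻¹ * D1 k μ τ j x') _ x :=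
    hinv.mul (hasFDerivAt_D1 μ hτ hsupp j x)
  rw [hessEntry, pderiv', hfun, hmul.fderiv]
  rw [ContinuousLinearMap.add_apply, ContinuousLinearMap.smul_apply,
    ContinuousLinearMap.smul_apply, ContinuousLinearMap.smul_apply,
    int_D2_single μ hτ hsupp i j x, Pd_single μ hτ hsupp i x,
    D1_eq μ hτ hsupp i x, D1_eq μ hτ hsupp j x]
  simp only [smul_eq_mul]
  have hqn : heatDensity μ τ x ≠ 0 := (hq x).ne'
  by_cases hij : i = j
  · simp only [hij, if_true, eq_self_iff_true]
    field_simp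
    ring
  · simp only [hij, if_false]
    field_simp
    ring

-- ==== final vector part ====
variable (hτ : 0 < τ) (hsupp : μ (Metric.closedBall (0 : Euc k) R₀)ᶜ = 0)
include hτ hsupp

def Svec (k : ℕ) (μ : Measure (Euc k)) (τ : ℝ) (x : Euc k) : Euc k :=
  (heatDensity μ τ x)⁻¹ • ∫ y, gaussDensity k τ (x - y) • (x - y) ∂μ

section FixedX
variable (x v : Euc k)

lemma int_wvec : Integrable (fun y => gaussDensity k τ (x - y) • (x - y)) μ := by
  refine int_cont_bdd μ hsupp ((cont_w x).smul (cont_sub x))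
    (C := gc * (‖x‖ + R₀)) (fun y hy => ?_)
  have hxy : ‖x - y‖ ≤ ‖x‖ + R₀ := (norm_sub_le _ _).trans (by linarith)
  refine le_trans (le_of_eq (norm_smul _ _)) ?_
  exact mul_le_mul (gauss_abs_le hτ _) hxy (norm_nonneg _) (gc_pos hτ).le

lemma Svec_coord (i : Fin k) :
    Svec k μ τ x i = (heatDensity μ τ x)⁻¹ * Aint k μ τ i x := by
  have h := ((EuclideanSpace.proj (𝕜 := ℝ) (ι := Fin k) i).integral_comp_comm
    (int_wvec μ hτ hsupp x))
  rw [Svec, PiLp.smul_apply, smul_eq_mul]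
  congr 1
  have h2 : (EuclideanSpace.proj (𝕜 := ℝ) (ι := Fin k) i)
      (∫ y, gaussDensity k τ (x - y) • (x - y) ∂μ) = Aint k μ τ i x := by
    rw [← h]
    rfl
  simpa using h2

lemma int_wy : Integrable (fun y => gaussDensity k τ (x - y) • y) μ := by
  refine int_cont_bdd μ hsupp ((cont_w x).smul continuous_id)
    (C := gc * R₀) (fun y hy => ?_)
  refine le_trans (le_of_eq (norm_smul _ _)) ?_
  exact mul_le_mul (gauss_abs_le hτ _) hy (norm_nonneg _) (gc_pos hτ).le

lemma Yvec_eq :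
    ∫ y, gaussDensity k τ (x - y) • y ∂μ
      = heatDensity μ τ x • (x - Svec k μ τ x) := by
  have hq : heatDensity μ τ x ≠ 0 := (heat_pos μ hτ hsupp x).ne'
  have h1 : ∫ y, gaussDensity k τ (x - y) • (x - y) ∂μ
      = heatDensity μ τ x • x - ∫ y, gaussDensity k τ (x - y) • y ∂μ := by
    have hsplit : (fun y => gaussDensity k τ (x - y) • (x - y))
        = fun y => gaussDensity k τ (x - y) • x - gaussDensity k τ (x - y) • y := by
      funext y; rw [smul_sub]
    rw [hsplit, integral_sub ?hi1 (int_wy μ hτ hsupp x)]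
    · congr 1
      rw [integral_smul_const]
      rfl
    case hi1 =>
      refine int_cont_bdd μ hsupp ((cont_w x).smul continuous_const)
        (C := gc * ‖x‖) (fun y hy => ?_)
      refine le_trans (le_of_eq (norm_smul _ _)) ?_
      exact mul_le_mul (gauss_abs_le hτ _) le_rfl (norm_nonneg _) (gc_pos hτ).le
  have h2 : ∫ y, gaussDensity k τ (x - y) • (x - y) ∂μ
      = heatDensity μ τ x • Svec k μ τ x := by
    rw [Svec, smul_inv_smul₀ hq]
  rw [smul_sub, ← h2, h1]
  abel

/-- the recentered position -/
def uFun (k : ℕ) (μ : Measure (Euc k)) (τ : ℝ) (x y : Euc k) : Euc k :=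
  (x - y) - Svec k μ τ x

omit hτ hsupp in
lemma uFun_eq (y : Euc k) : uFun k μ τ x y = (x - Svec k μ τ x) - y := by
  rw [uFun]; abel

omit hτ hsupp in
lemma cont_u : Continuous (fun y => uFun k μ τ x y) := by
  unfold uFun
  exact (cont_sub x).sub continuous_const

omit hτ hsupp in
lemma u_bdd (y : Euc k) (hy : ‖y‖ ≤ R₀) :
    ‖uFun k μ τ x y‖ ≤ ‖x - Svec k μ τ x‖ + R₀ := by
  rw [uFun_eq]
  exact (norm_sub_le _ _).trans (by linarith)

lemma int_wu2 : Integrable (fun y => gaussDensity k τ (x - y) * ‖uFun k μ τ x y‖ ^ 2) μ := by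
  refine int_cont_bdd μ hsupp ((cont_w x).mul ((cont_u μ x).norm.pow 2))
    (C := gc * (‖x - Svec k μ τ x‖ + R₀) ^ 2) (fun y hy => ?_)
  have hu := u_bdd (τ := τ) μ x y hy
  have hu0 : (0:ℝ) ≤ ‖x - Svec k μ τ x‖ + R₀ := (norm_nonneg _).trans hu
  rw [Real.norm_eq_abs, abs_mul]
  refine mul_le_mul (gauss_abs_le hτ _) ?_ (abs_nonneg _) (gc_pos hτ).le
  rw [abs_of_nonneg (by positivity)]
  exact pow_le_pow_left₀ (norm_nonneg _) hu 2

lemma var_le :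
    ∫ y, gaussDensity k τ (x - y) * ‖uFun k μ τ x y‖ ^ 2 ∂μ
      ≤ heatDensity μ τ x * R₀ ^ 2 := by
  set q := heatDensity μ τ x with hqdef
  set m := x - Svec k μ τ x with hmdef
  have hq : 0 < q := heat_pos μ hτ hsupp x
  have hY : ∫ y, gaussDensity k τ (x - y) • y ∂μ = q • m := Yvec_eq μ hτ hsupp x
  have hint_w := int_w μ hτ hsupp x
  have hint_wy2 : Integrable (fun y => gaussDensity k τ (x - y) * ‖y‖ ^ 2) μ := by
    refine int_cont_bdd μ hsupp ((cont_w x).mul (continuous_norm.pow 2))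
      (C := gc * R₀ ^ 2) (fun y hy => ?_)
    have h0 : (0:ℝ) ≤ R₀ := (norm_nonneg y).trans hy
    rw [Real.norm_eq_abs, abs_mul]
    refine mul_le_mul (gauss_abs_le hτ _) ?_ (abs_nonneg _) (gc_pos hτ).le
    rw [abs_of_nonneg (by positivity)]
    exact pow_le_pow_left₀ (norm_nonneg _) hy 2
  have hint_wmy : Integrable (fun y => gaussDensity k τ (x - y) * (inner ℝ m y : ℝ)) μ := by
    refine int_cont_bdd μ hsupp ((cont_w x).mul (Continuous.inner continuous_const continuous_id))
      (C := gc * (‖m‖ * R₀)) (fun y hy => ?_)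
    rw [Real.norm_eq_abs, abs_mul]
    refine mul_le_mul (gauss_abs_le hτ _) ?_ (abs_nonneg _) (gc_pos hτ).le
    exact (abs_real_inner_le_norm m y).trans
      (mul_le_mul_of_nonneg_left hy (norm_nonneg m))
  have hpt : ∀ y : Euc k, gaussDensity k τ (x - y) * ‖uFun k μ τ x y‖ ^ 2
      = gaussDensity k τ (x - y) * ‖m‖ ^ 2
        - 2 * (gaussDensity k τ (x - y) * (inner ℝ m y : ℝ))
        + gaussDensity k τ (x - y) * ‖y‖ ^ 2 := by
    intro y
    rw [uFun_eq, ← hmdef, norm_sub_sq_real]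
    ring
  have hIm : ∫ y, gaussDensity k τ (x - y) * (inner ℝ m y : ℝ) ∂μ = q * ‖m‖ ^ 2 := by
    have h1 : ∀ y : Euc k, gaussDensity k τ (x - y) * (inner ℝ m y : ℝ)
        = (innerSL ℝ m) (gaussDensity k τ (x - y) • y) := by
      intro y
      rw [ContinuousLinearMap.map_smul]
      simp [smul_eq_mul]
    rw [integral_congr_ae (Filter.Eventually.of_forall h1),
      (innerSL ℝ m).integral_comp_comm (int_wy μ hτ hsupp x), hY]
    rw [ContinuousLinearMap.map_smul]
    simp only [smul_eq_mul, innerSL_apply_apply]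
    rw [real_inner_self_eq_norm_sq]
  calc ∫ y, gaussDensity k τ (x - y) * ‖uFun k μ τ x y‖ ^ 2 ∂μ
      = ∫ y, (gaussDensity k τ (x - y) * ‖m‖ ^ 2
          - 2 * (gaussDensity k τ (x - y) * (inner ℝ m y : ℝ))
          + gaussDensity k τ (x - y) * ‖y‖ ^ 2) ∂μ :=
        integral_congr_ae (Filter.Eventually.of_forall hpt)
    _ = (∫ y, gaussDensity k τ (x - y) ∂μ) * ‖m‖ ^ 2
          - 2 * (q * ‖m‖ ^ 2) + ∫ y, gaussDensity k τ (x - y) * ‖y‖ ^ 2 ∂μ := by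
        have hs1 : Integrable (fun y => gaussDensity k τ (x - y) * ‖m‖ ^ 2
            - 2 * (gaussDensity k τ (x - y) * (inner ℝ m y : ℝ))) μ :=
          (hint_w.mul_const (‖m‖ ^ 2)).sub (hint_wmy.const_mul 2)
        rw [integral_add hs1 hint_wy2,
          integral_sub (hint_w.mul_const (‖m‖ ^ 2)) (hint_wmy.const_mul 2),
          integral_mul_const, integral_const_mul, hIm]
    _ = q * ‖m‖ ^ 2 - 2 * (q * ‖m‖ ^ 2) + ∫ y, gaussDensity k τ (x - y) * ‖y‖ ^ 2 ∂μ := by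
        rw [show (∫ y, gaussDensity k τ (x - y) ∂μ) = q from rfl]
    _ ≤ q * ‖m‖ ^ 2 - 2 * (q * ‖m‖ ^ 2) + q * R₀ ^ 2 := by
        gcongr
        calc ∫ y, gaussDensity k τ (x - y) * ‖y‖ ^ 2 ∂μ
            ≤ ∫ y, gaussDensity k τ (x - y) * R₀ ^ 2 ∂μ := by
              refine integral_mono_ae hint_wy2 (hint_w.mul_const _) ?_
              filter_upwards [ae_norm_le μ hsupp] with y hy
              have h0 : (0:ℝ) ≤ R₀ := (norm_nonneg y).trans hy
              exact mul_le_mul_of_nonneg_left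
                (pow_le_pow_left₀ (norm_nonneg _) hy 2) (gauss_pos hτ _).le
          _ = q * R₀ ^ 2 := by rw [integral_mul_const]; rfl
    _ ≤ q * R₀ ^ 2 := by nlinarith [hq, norm_nonneg m, sq_nonneg ‖m‖]
end FixedX


omit hτ hsupp in
lemma inner_sum_eq (a b : Euc k) : (inner ℝ a b : ℝ) = ∑ j, a j * b j := by
  simp [PiLp.inner_apply, RCLike.inner_apply, conj_trivial, mul_comm]

def Tvec (k : ℕ) (μ : Measure (Euc k)) (τ : ℝ) (x v : Euc k) : Euc k :=
  ∫ y, (gaussDensity k τ (x - y) * (inner ℝ (uFun k μ τ x y) v : ℝ)) • uFun k μ τ x y ∂μ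

section FixedXV
variable (x v : Euc k)

omit hτ hsupp in
lemma cont_zv : Continuous (fun y : Euc k => (inner ℝ (x - y) v : ℝ)) :=
  Continuous.inner (cont_sub x) continuous_const

omit hτ hsupp in
lemma cont_uv : Continuous (fun y : Euc k => (inner ℝ (uFun k μ τ x y) v : ℝ)) :=
  Continuous.inner (cont_u μ x) continuous_const

lemma int_wzv : Integrable (fun y => gaussDensity k τ (x - y) * (inner ℝ (x - y) v : ℝ)) μ := by
  refine int_cont_bdd μ hsupp ((cont_w x).mul (cont_zv x v))
    (C := gc * ((‖x‖ + R₀) * ‖v‖)) (fun y hy => ?_)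
  have hxy : ‖x - y‖ ≤ ‖x‖ + R₀ := (norm_sub_le _ _).trans (by linarith)
  rw [Real.norm_eq_abs, abs_mul]
  refine mul_le_mul (gauss_abs_le hτ _) ?_ (abs_nonneg _) (gc_pos hτ).le
  refine (abs_real_inner_le_norm _ _).trans ?_
  exact mul_le_mul_of_nonneg_right hxy (norm_nonneg v)

lemma int_wz_zv (i : Fin k) :
    Integrable (fun y => gaussDensity k τ (x - y) * ((x - y) i * (inner ℝ (x - y) v : ℝ))) μ := by
  refine int_cont_bdd μ hsupp ((cont_w x).mul ((cont_coord x i).mul (cont_zv x v)))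
    (C := gc * ((‖x‖ + R₀) * ((‖x‖ + R₀) * ‖v‖))) (fun y hy => ?_)
  have hxy : ‖x - y‖ ≤ ‖x‖ + R₀ := (norm_sub_le _ _).trans (by linarith)
  have h0 : (0:ℝ) ≤ ‖x‖ + R₀ := (norm_nonneg _).trans hxy
  rw [Real.norm_eq_abs, abs_mul, abs_mul]
  refine mul_le_mul (gauss_abs_le hτ _) ?_ (by positivity) (gc_pos hτ).le
  refine mul_le_mul ((abs_coord_le _ i).trans hxy) ?_ (abs_nonneg _) h0
  refine (abs_real_inner_le_norm _ _).trans ?_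
  exact mul_le_mul_of_nonneg_right hxy (norm_nonneg v)

lemma int_wuv_u :
    Integrable (fun y => (gaussDensity k τ (x - y) * (inner ℝ (uFun k μ τ x y) v : ℝ))
      • uFun k μ τ x y) μ := by
  refine int_cont_bdd μ hsupp (((cont_w x).mul (cont_uv μ x v)).smul (cont_u μ x))
    (C := gc * ((‖x - Svec k μ τ x‖ + R₀) * ‖v‖) * (‖x - Svec k μ τ x‖ + R₀))
    (fun y hy => ?_)
  have hu := u_bdd (τ := τ) μ x y hy
  have hu0 : (0:ℝ) ≤ ‖x - Svec k μ τ x‖ + R₀ := (norm_nonneg _).trans hu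
  refine le_trans (le_of_eq (norm_smul _ _)) ?_
  refine mul_le_mul ?_ hu (norm_nonneg _) (by positivity)
  rw [Real.norm_eq_abs, abs_mul]
  refine mul_le_mul (gauss_abs_le hτ _) ?_ (abs_nonneg _) (gc_pos hτ).le
  refine (abs_real_inner_le_norm _ _).trans ?_
  exact mul_le_mul_of_nonneg_right hu (norm_nonneg v)


lemma K2 : ∫ y, gaussDensity k τ (x - y) * (inner ℝ (x - y) v : ℝ) ∂μ
    = ∑ j, Aint k μ τ j x * v j := by
  have h1 : ∀ y : Euc k, gaussDensity k τ (x - y) * (inner ℝ (x - y) v : ℝ)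
      = ∑ j, (gaussDensity k τ (x - y) * ((x - y) j)) * v j := by
    intro y
    rw [inner_sum_eq (x - y) v, Finset.mul_sum]
    congr 1; funext j; ring
  rw [integral_congr_ae (Filter.Eventually.of_forall h1),
    integral_finset_sum _ (fun j _ => (int_wz μ hτ hsupp j x).mul_const (v j))]
  congr 1; funext j
  rw [integral_mul_const]
  rfl

lemma K1 (i : Fin k) :
    ∫ y, gaussDensity k τ (x - y) * ((x - y) i * (inner ℝ (x - y) v : ℝ)) ∂μ
      = ∑ j, Bint k μ τ i j x * v j := by
  have h1 : ∀ y : Euc k, gaussDensity k τ (x - y) * ((x - y) i * (inner ℝ (x - y) v : ℝ))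
      = ∑ j, (gaussDensity k τ (x - y) * ((x - y) i * (x - y) j)) * v j := by
    intro y
    rw [inner_sum_eq (x - y) v, Finset.mul_sum, Finset.mul_sum]
    congr 1; funext j; ring
  rw [integral_congr_ae (Filter.Eventually.of_forall h1),
    integral_finset_sum _ (fun j _ => (int_wzz μ hτ hsupp i j x).mul_const (v j))]
  congr 1; funext j
  rw [integral_mul_const]
  rfl

lemma sv_eq : (inner ℝ (Svec k μ τ x) v : ℝ)
    = (heatDensity μ τ x)⁻¹ * ∫ y, gaussDensity k τ (x - y) * (inner ℝ (x - y) v : ℝ) ∂μ := by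
  rw [inner_sum_eq (Svec k μ τ x) v, K2 μ hτ hsupp x v, Finset.mul_sum]
  congr 1; funext j
  rw [Svec_coord μ hτ hsupp x j]
  ring

lemma Tvec_coord (i : Fin k) :
    Tvec k μ τ x v i = ∫ y, (gaussDensity k τ (x - y) * (inner ℝ (uFun k μ τ x y) v : ℝ))
      * (uFun k μ τ x y i) ∂μ := by
  have h := ((EuclideanSpace.proj (𝕜 := ℝ) (ι := Fin k) i).integral_comp_comm
    (int_wuv_u μ hτ hsupp x v))
  have h2 : (EuclideanSpace.proj (𝕜 := ℝ) (ι := Fin k) i) (Tvec k μ τ x v)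
      = ∫ y, (gaussDensity k τ (x - y) * (inner ℝ (uFun k μ τ x y) v : ℝ))
        * (uFun k μ τ x y i) ∂μ := by
    rw [Tvec, ← h]
    rfl
  simpa using h2

lemma Texp (i : Fin k) :
    Tvec k μ τ x v i
      = (∫ y, gaussDensity k τ (x - y) * ((x - y) i * (inner ℝ (x - y) v : ℝ)) ∂μ)
        - (heatDensity μ τ x)⁻¹
          * (∫ y, gaussDensity k τ (x - y) * (inner ℝ (x - y) v : ℝ) ∂μ) * Aint k μ τ i x := by
  set q := heatDensity μ τ x with hqdef
  have hq : 0 < q := heat_pos μ hτ hsupp x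
  set s : ℝ := Svec k μ τ x i with hsdef
  set sv : ℝ := (inner ℝ (Svec k μ τ x) v : ℝ) with hsvdef
  set IV : ℝ := ∫ y, gaussDensity k τ (x - y) * (inner ℝ (x - y) v : ℝ) ∂μ with hIVdef
  have hpt : ∀ y : Euc k,
      (gaussDensity k τ (x - y) * (inner ℝ (uFun k μ τ x y) v : ℝ)) * (uFun k μ τ x y i)
        = gaussDensity k τ (x - y) * ((x - y) i * (inner ℝ (x - y) v : ℝ))
          - sv * (gaussDensity k τ (x - y) * ((x - y) i))
          - s * (gaussDensity k τ (x - y) * (inner ℝ (x - y) v : ℝ))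
          + (sv * s) * gaussDensity k τ (x - y) := by
    intro y
    have hu1 : (inner ℝ (uFun k μ τ x y) v : ℝ) = (inner ℝ (x - y) v : ℝ) - sv := by
      rw [uFun, inner_sub_left]
    have hu2 : uFun k μ τ x y i = (x - y) i - s := by
      rw [uFun]; rfl
    rw [hu1, hu2]
    ring
  rw [Tvec_coord μ hτ hsupp x v i,
    integral_congr_ae (Filter.Eventually.of_forall hpt)]
  have i1 := int_wz_zv μ hτ hsupp x v i
  have i2 := (int_wz μ hτ hsupp i x).const_mul sv
  have i3 := (int_wzv μ hτ hsupp x v).const_mul s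
  have i4 := (int_w μ hτ hsupp x).const_mul (sv * s)
  have j1 : Integrable (fun y => gaussDensity k τ (x - y) * ((x - y) i * (inner ℝ (x - y) v : ℝ))
      - sv * (gaussDensity k τ (x - y) * ((x - y) i))) μ := i1.sub i2
  have j2 : Integrable (fun y => gaussDensity k τ (x - y) * ((x - y) i * (inner ℝ (x - y) v : ℝ))
      - sv * (gaussDensity k τ (x - y) * ((x - y) i))
      - s * (gaussDensity k τ (x - y) * (inner ℝ (x - y) v : ℝ))) μ := j1.sub i3
  rw [integral_add j2 i4, integral_sub j1 i3, integral_sub i1 i2,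
    integral_const_mul, integral_const_mul, integral_const_mul]
  have hA : ∫ y, gaussDensity k τ (x - y) * ((x - y) i) ∂μ = Aint k μ τ i x := rfl
  have hQ : ∫ y, gaussDensity k τ (x - y) ∂μ = q := rfl
  rw [hA, hQ, ← hIVdef]
  have hs : s = q⁻¹ * Aint k μ τ i x := Svec_coord μ hτ hsupp x i
  have hsv : sv = q⁻¹ * IV := sv_eq μ hτ hsupp x v
  rw [hs, hsv]
  field_simp
  ring

lemma hess_coord (i : Fin k) :
    (Matrix.toEuclideanCLM (𝕜 := ℝ) (n := Fin k) (hessMatrix (logHeat μ τ) x)) v i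
      = τ⁻¹ ^ 2 * ((heatDensity μ τ x)⁻¹ * Tvec k μ τ x v i) - τ⁻¹ * v i := by
  set q := heatDensity μ τ x with hqdef
  have hq : 0 < q := heat_pos μ hτ hsupp x
  have hcoord : (Matrix.toEuclideanCLM (𝕜 := ℝ) (n := Fin k) (hessMatrix (logHeat μ τ) x)) v i
      = ∑ j, hessEntry (logHeat μ τ) i j x * v j := rfl
  rw [hcoord]
  have expand : ∀ j : Fin k, hessEntry (logHeat μ τ) i j x * v j
      = τ⁻¹ ^ 2 * q⁻¹ * (Bint k μ τ i j x * v j)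
        - τ⁻¹ ^ 2 * (q⁻¹ * q⁻¹) * Aint k μ τ i x * (Aint k μ τ j x * v j)
        - τ⁻¹ * ((if i = j then 1 else 0) * v j) := by
    intro j
    rw [hess_entry_eq μ hτ hsupp i j x, ← hqdef]
    ring
  rw [Finset.sum_congr rfl (fun j _ => expand j)]
  rw [Finset.sum_sub_distrib, Finset.sum_sub_distrib, ← Finset.mul_sum, ← Finset.mul_sum,
    ← Finset.mul_sum]
  have hdelta : ∑ j, (if i = j then (1:ℝ) else 0) * v j = v i := by
    simp [ite_mul, Finset.sum_ite_eq]
  rw [hdelta, ← K1 μ hτ hsupp x v i, ← K2 μ hτ hsupp x v,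
    Texp μ hτ hsupp x v i]
  rw [← hqdef]
  field_simp

lemma hess_vec :
    (Matrix.toEuclideanCLM (𝕜 := ℝ) (n := Fin k) (hessMatrix (logHeat μ τ) x)) v
      = (τ⁻¹ ^ 2 * (heatDensity μ τ x)⁻¹) • Tvec k μ τ x v - τ⁻¹ • v := by
  apply PiLp.ext
  intro i
  rw [hess_coord μ hτ hsupp x v i]
  rw [PiLp.sub_apply, PiLp.smul_apply, PiLp.smul_apply, smul_eq_mul, smul_eq_mul]
  ring

lemma Tvec_norm_le :
    ‖Tvec k μ τ x v‖ ≤ (∫ y, gaussDensity k τ (x - y) * ‖uFun k μ τ x y‖ ^ 2 ∂μ) * ‖v‖ := by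
  refine (norm_integral_le_integral_norm _).trans ?_
  rw [← integral_mul_const]
  refine integral_mono (int_wuv_u μ hτ hsupp x v).norm
    ((int_wu2 μ hτ hsupp x).mul_const ‖v‖) (fun y => ?_)
  have h1 : ‖(gaussDensity k τ (x - y) * (inner ℝ (uFun k μ τ x y) v : ℝ))
      • uFun k μ τ x y‖
      = |gaussDensity k τ (x - y) * (inner ℝ (uFun k μ τ x y) v : ℝ)|
        * ‖uFun k μ τ x y‖ := by
    rw [norm_smul]; rfl
  rw [h1, abs_mul, abs_of_pos (gauss_pos hτ _)]
  have h2 : |(inner ℝ (uFun k μ τ x y) v : ℝ)| ≤ ‖uFun k μ τ x y‖ * ‖v‖ :=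
    abs_real_inner_le_norm _ _
  have hw := (gauss_pos hτ (x - y)).le
  have hun := norm_nonneg (uFun k μ τ x y)
  have hvn := norm_nonneg v
  calc gaussDensity k τ (x - y) * |(inner ℝ (uFun k μ τ x y) v : ℝ)| * ‖uFun k μ τ x y‖
      ≤ gaussDensity k τ (x - y) * (‖uFun k μ τ x y‖ * ‖v‖) * ‖uFun k μ τ x y‖ := by
        have := mul_le_mul_of_nonneg_left h2 hw
        exact mul_le_mul_of_nonneg_right this hun
    _ = gaussDensity k τ (x - y) * ‖uFun k μ τ x y‖ ^ 2 * ‖v‖ := by ring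

end FixedXV

theorem main_bound (x : Euc k) :
    ‖Matrix.toEuclideanCLM (𝕜 := ℝ) (n := Fin k) (hessMatrix (logHeat μ τ) x)‖ ≤
      1 / τ + R₀ ^ 2 / τ ^ 2 := by
  have hq : 0 < heatDensity μ τ x := heat_pos μ hτ hsupp x
  refine ContinuousLinearMap.opNorm_le_bound _ (by positivity) (fun v => ?_)
  rw [hess_vec μ hτ hsupp x v]
  set q := heatDensity μ τ x with hqdef
  set T := Tvec k μ τ x v with hTdef
  have hT1 : ‖T‖ ≤ (q * R₀ ^ 2) * ‖v‖ := by
    refine (Tvec_norm_le μ hτ hsupp x v).trans ?_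
    exact mul_le_mul_of_nonneg_right (var_le μ hτ hsupp x) (norm_nonneg v)
  calc ‖(τ⁻¹ ^ 2 * q⁻¹) • T - τ⁻¹ • v‖
      ≤ ‖(τ⁻¹ ^ 2 * q⁻¹) • T‖ + ‖τ⁻¹ • v‖ := norm_sub_le _ _
    _ = (τ⁻¹ ^ 2 * q⁻¹) * ‖T‖ + τ⁻¹ * ‖v‖ := by
        rw [norm_smul, norm_smul, Real.norm_eq_abs, Real.norm_eq_abs,
          abs_of_pos (show (0:ℝ) < τ⁻¹ ^ 2 * q⁻¹ by positivity),
          abs_of_pos (show (0:ℝ) < τ⁻¹ by positivity)]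
    _ ≤ (τ⁻¹ ^ 2 * q⁻¹) * ((q * R₀ ^ 2) * ‖v‖) + τ⁻¹ * ‖v‖ :=
        add_le_add (mul_le_mul_of_nonneg_left hT1 (by positivity)) le_rfl
    _ = (1 / τ + R₀ ^ 2 / τ ^ 2) * ‖v‖ := by
        field_simp
        ring


end AuxHessianBound

/-- for a measure supported in the closed ball of radius `R₀`, the operator
(spectral) norm of the Hessian of the log heat-smoothed density is bounded by
`1/τ + R₀²/τ²`. -/
theorem hessian_log_density_opNorm_bound
    (k : ℕ) (hk : 1 ≤ k) (μ : Measure (Euc k)) [IsProbabilityMeasure μ]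
    (R₀ : ℝ) (hsupp : μ (Metric.closedBall (0 : Euc k) R₀)ᶜ = 0)
    (τ : ℝ) (hτ : 0 < τ) (x : Euc k) :
    ‖Matrix.toEuclideanCLM (𝕜 := ℝ) (n := Fin k) (hessMatrix (logHeat μ τ) x)‖ ≤
      1 / τ + R₀ ^ 2 / τ ^ 2 :=
  main_bound μ hτ hsupp x
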